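/- For reals a, b, x define f(a, b, x) = (a+x)·𝟙[a+x ≤ 2] + 2(b+x)·𝟙[b+x ≤ 1] + (b+x)·𝟙[b+x ≤ 3]. Then f(a, b, x) ≤ 5 for all a, b, x ∈ ℝ. Moreover, if a, b ∈ {1, 2}, then the supremum over x ∈ ℝ of f(a, b, x) is attained and equals 4 if a = b and equals 5 if a ≠ b. -/
import Mathlib


/-- The per-edge payment function of the APX-hardness reduction:
`f a b x = (a+x)·𝟙[a+x ≤ 2] + 2(b+x)·𝟙[b+x ≤ 1] + (b+x)·𝟙[b+x ≤ 3]`. -/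
noncomputable def edgePayment (a b x : ℝ) : ℝ :=
  (if a + x ≤ 2 then a + x else 0) + 2 * (if b + x ≤ 1 then b + x else 0) +
    (if b + x ≤ 3 then b + x else 0)

/-- per-edge profit bound: 4 for an uncut edge, 5 for a cut edge.
`f a b x ≤ 5` for all reals, and for `a, b ∈ {1, 2}` the supremum over `x` of
`f a b x` is attained and equals `4` if `a = b` and `5` if `a ≠ b`. -/
theorem edge_payment_bounds :
    (∀ a b x : ℝ, edgePayment a b x ≤ 5) ∧
    (∀ a b : ℝ, (a = 1 ∨ a = 2) → (b = 1 ∨ b = 2) →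
      IsGreatest (Set.range (edgePayment a b)) (if a = b then 4 else 5)) := by
  constructor
  · intro a b x
    unfold edgePayment
    split_ifs <;> linarith
  · rintro a b (rfl | rfl) (rfl | rfl)
    · rw [if_pos rfl]
      refine ⟨⟨0, by norm_num [edgePayment]⟩, ?_⟩
      rintro y ⟨x, rfl⟩
      unfold edgePayment; split_ifs <;> linarith
    · rw [if_neg (by norm_num)]
      refine ⟨⟨1, by norm_num [edgePayment]⟩, ?_⟩
      rintro y ⟨x, rfl⟩
      unfold edgePayment; split_ifs <;> linarith
    · rw [if_neg (by norm_num)]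
      refine ⟨⟨0, by norm_num [edgePayment]⟩, ?_⟩
      rintro y ⟨x, rfl⟩
      unfold edgePayment; split_ifs <;> linarith
    · rw [if_pos rfl]
      refine ⟨⟨-1, by norm_num [edgePayment]⟩, ?_⟩
      rintro y ⟨x, rfl⟩
      unfold edgePayment; split_ifs <;> linarith
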